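/- Let h be a Hermitian form of signature (2,1) on ℂ³, c₁,c₂,c₃ a basis of positive-norm vectors normalized to norm 1, (d₁,d₂,d₃) the anti-dual basis, and p₁ = a·d₂ + b·d₃ with b ≠ 0 an isotropic vector (h(p₁,p₁) = 0). Set δ = h(c₂,c₃)·a / (h(c₂,c₂)·b). Then (1−φ₁₃)|δ|² + 2·Re((Φ₁₃₂ − φ₂₃)·δ) + φ₂₃(1−φ₁₂) = 0, where φᵢⱼ = |h(cᵢ,cⱼ)|² and Φ₁₃₂ = h(c₁,c₃)h(c₃,c₂)h(c₂,c₁). -/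

import Mathlib

open Matrix Complex

noncomputable def herm (H : Matrix (Fin 3) (Fin 3) ℂ) (v w : Fin 3 → ℂ) : ℂ :=
  ∑ i, ∑ j, v i * H i j * (starRingEnd ℂ) (w j)

lemma herm_conj {H : Matrix (Fin 3) (Fin 3) ℂ} (hH : Hᴴ = H) (v w : Fin 3 → ℂ) :
    herm H w v = (starRingEnd ℂ) (herm H v w) := by
  unfold herm
  rw [map_sum, Finset.sum_comm]
  refine Finset.sum_congr rfl fun i _ => ?_
  rw [map_sum]
  refine Finset.sum_congr rfl fun j _ => ?_
  have hji : H i j = (starRingEnd ℂ) (H j i) := by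
    conv_lhs => rw [← hH]
    simp [Matrix.conjTranspose_apply]
  rw [hji]
  simp only [_root_.map_mul, RingHomCompTriple.comp_apply, RingHom.id_apply,
    starRingEnd_self_apply]
  ring

lemma herm_comb_left (H : Matrix (Fin 3) (Fin 3) ℂ) (a b : ℂ) (v w u : Fin 3 → ℂ) :
    herm H (a • v + b • w) u = a * herm H v u + b * herm H w u := by
  unfold herm
  rw [Finset.mul_sum, Finset.mul_sum, ← Finset.sum_add_distrib]
  refine Finset.sum_congr rfl fun i _ => ?_
  rw [Finset.mul_sum, Finset.mul_sum, ← Finset.sum_add_distrib]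
  refine Finset.sum_congr rfl fun j _ => ?_
  simp only [Pi.add_apply, Pi.smul_apply, smul_eq_mul]
  ring

lemma herm_sum_left (H : Matrix (Fin 3) (Fin 3) ℂ) (r : Fin 3 → ℂ) (v : Fin 3 → Fin 3 → ℂ)
    (w : Fin 3 → ℂ) :
    herm H (∑ k, r k • v k) w = ∑ k, r k * herm H (v k) w := by
  unfold herm
  simp only [Finset.mul_sum]
  conv_rhs => rw [Finset.sum_comm]
  refine Finset.sum_congr rfl fun i _ => ?_
  conv_rhs => rw [Finset.sum_comm]
  refine Finset.sum_congr rfl fun j _ => ?_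
  rw [Finset.sum_apply, Finset.sum_mul, Finset.sum_mul]
  refine Finset.sum_congr rfl fun k _ => ?_
  simp only [Pi.smul_apply, smul_eq_mul]
  ring

lemma herm_comb_right {H : Matrix (Fin 3) (Fin 3) ℂ} (hH : Hᴴ = H) (a b : ℂ)
    (v w u : Fin 3 → ℂ) :
    herm H u (a • v + b • w) =
      (starRingEnd ℂ) a * herm H u v + (starRingEnd ℂ) b * herm H u w := by
  rw [herm_conj hH, herm_comb_left, map_add, _root_.map_mul, _root_.map_mul,
    ← herm_conj hH, ← herm_conj hH]

/-- The circle equation satisfied by the δ-invariant of a flag relative to two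
complex lines: if p₁ = a·d₂ + b·d₃ is isotropic then
(1−φ₁₃)|δ|² + 2 Re((Φ₁₃₂ − φ₂₃)δ) + φ₂₃(1−φ₁₂) = 0. -/
theorem stmt9 (H : Matrix (Fin 3) (Fin 3) ℂ) (hH : Hᴴ = H)
    (hsig : ∃ P : Matrix (Fin 3) (Fin 3) ℂ, IsUnit P.det ∧
      Pᴴ * H * P = Matrix.diagonal ![1, 1, -1])
    (c d : Fin 3 → Fin 3 → ℂ)
    (hbasis : LinearIndependent ℂ c)
    (hunit : ∀ i, herm H (c i) (c i) = 1)
    (hd : ∀ i j, herm H (d i) (c j) = if i = j then 1 else 0)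
    (a b : ℂ) (hb : b ≠ 0)
    (p₁ : Fin 3 → ℂ) (hp : p₁ = a • d 1 + b • d 2)
    (hiso : herm H p₁ p₁ = 0) :
    (1 - Complex.normSq (herm H (c 0) (c 2))) *
        Complex.normSq (herm H (c 1) (c 2) * a / (herm H (c 1) (c 1) * b)) +
      2 * ((herm H (c 0) (c 2) * herm H (c 2) (c 1) * herm H (c 1) (c 0) -
            (Complex.normSq (herm H (c 1) (c 2)) : ℂ)) *
            (herm H (c 1) (c 2) * a / (herm H (c 1) (c 1) * b))).re +
      Complex.normSq (herm H (c 1) (c 2)) *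
        (1 - Complex.normSq (herm H (c 0) (c 1))) = 0 := by
  classical
  -- basis from linear independence
  have hcard : Fintype.card (Fin 3) = Module.finrank ℂ (Fin 3 → ℂ) := by simp
  let B : Module.Basis (Fin 3) ℂ (Fin 3 → ℂ) := basisOfLinearIndependentOfCardEqFinrank hbasis hcard
  have hB : ∀ i, B i = c i := fun i => by
    simp [B, coe_basisOfLinearIndependentOfCardEqFinrank]
  set r : Fin 3 → Fin 3 → ℂ := fun i k => B.repr (d i) k with hr
  have hdsum : ∀ i, d i = ∑ k, r i k • c k := by
    intro i
    conv_lhs => rw [← B.sum_repr (d i)]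
    refine Finset.sum_congr rfl fun k _ => ?_
    rw [hB]
  have hMG : ∀ i j, ∑ k, r i k * herm H (c k) (c j) = if i = j then 1 else 0 := by
    intro i j
    rw [← herm_sum_left, ← hdsum, hd]
  have hcd : ∀ k j, herm H (c k) (d j) = if j = k then 1 else 0 := by
    intro k j
    rw [herm_conj hH, hd]
    split <;> simp
  have hu : ∀ i j, herm H (d i) (d j) = r i j := by
    intro i j
    rw [hdsum i, herm_sum_left]
    simp [hcd, Finset.sum_ite_eq]
  -- matrix identities
  set G : Matrix (Fin 3) (Fin 3) ℂ := Matrix.of fun i j => herm H (c i) (c j) with hG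
  set M : Matrix (Fin 3) (Fin 3) ℂ := Matrix.of r with hM
  have hMG1 : M * G = 1 := by
    ext i j
    simpa [Matrix.mul_apply, Matrix.one_apply, hM, hG] using hMG i j
  have hadj : G.det • M = G.adjugate := by
    calc G.det • M = M * (G.det • (1 : Matrix (Fin 3) (Fin 3) ℂ)) := by
          rw [Matrix.mul_smul, Matrix.mul_one]
      _ = M * (G * G.adjugate) := by rw [Matrix.mul_adjugate]
      _ = (M * G) * G.adjugate := by rw [Matrix.mul_assoc]
      _ = G.adjugate := by rw [hMG1, Matrix.one_mul]
  have hentry : ∀ i j, G.det * r i j = G.adjugate i j := by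
    intro i j
    have := congrFun (congrFun hadj i) j
    simpa [hM] using this
  -- notation
  set x := herm H (c 0) (c 1) with hxdef
  set y := herm H (c 0) (c 2) with hydef
  set z := herm H (c 1) (c 2) with hzdef
  have hx' : herm H (c 1) (c 0) = (starRingEnd ℂ) x := herm_conj hH _ _
  have hy' : herm H (c 2) (c 0) = (starRingEnd ℂ) y := herm_conj hH _ _
  have hz' : herm H (c 2) (c 1) = (starRingEnd ℂ) z := herm_conj hH _ _
  -- adjugate entries
  have hadj3 := Matrix.adjugate_fin_three G
  have hGapp : ∀ i j, G i j = herm H (c i) (c j) := fun i j => rfl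
  have h11 : G.det * r 1 1 = 1 - y * (starRingEnd ℂ) y := by
    rw [hentry 1 1, hadj3]
    simp [hGapp, hunit, hx', hy', hz']
    left; rfl
  have h12 : G.det * r 1 2 = y * (starRingEnd ℂ) x - z := by
    rw [hentry 1 2, hadj3]
    simp [hGapp, hunit, hx', hy', hz']
    ring
  have h21 : G.det * r 2 1 = x * (starRingEnd ℂ) y - (starRingEnd ℂ) z := by
    rw [hentry 2 1, hadj3]
    simp [hGapp, hunit, hx', hy', hz']
    ring
  have h22 : G.det * r 2 2 = 1 - x * (starRingEnd ℂ) x := by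
    rw [hentry 2 2, hadj3]
    simp [hGapp, hunit, hx', hy', hz']
    left; rfl
  -- expand hiso
  have hiso' : a * ((starRingEnd ℂ) a * r 1 1 + (starRingEnd ℂ) b * r 1 2) +
      b * ((starRingEnd ℂ) a * r 2 1 + (starRingEnd ℂ) b * r 2 2) = 0 := by
    rw [hp] at hiso
    rw [herm_comb_left] at hiso
    rw [herm_comb_right hH, herm_comb_right hH] at hiso
    rw [hu 1 1, hu 1 2, hu 2 1, hu 2 2] at hiso
    exact hiso
  have E : a * (starRingEnd ℂ) a * (1 - y * (starRingEnd ℂ) y) +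
      a * (starRingEnd ℂ) b * (y * (starRingEnd ℂ) x - z) +
      (starRingEnd ℂ) a * b * (x * (starRingEnd ℂ) y - (starRingEnd ℂ) z) +
      b * (starRingEnd ℂ) b * (1 - x * (starRingEnd ℂ) x) = 0 := by
    linear_combination G.det * hiso' - (a * (starRingEnd ℂ) a) * h11 -
      (a * (starRingEnd ℂ) b) * h12 - ((starRingEnd ℂ) a * b) * h21 -
      (b * (starRingEnd ℂ) b) * h22
  -- final algebra
  rw [hunit 1, one_mul, hx', hz']
  rw [← Complex.ofReal_eq_zero]
  push_cast
  have hre : ∀ w : ℂ, ((w.re : ℝ) : ℂ) = (w + (starRingEnd ℂ) w) / 2 := fun w => by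
    rw [Complex.add_conj]; push_cast; ring
  rw [hre]
  simp only [← Complex.mul_conj]
  simp only [map_div₀, _root_.map_mul, map_sub, _root_.map_one, Complex.conj_conj]
  have hb' : (starRingEnd ℂ) b ≠ 0 := by simpa using hb
  field_simp
  linear_combination z * (starRingEnd ℂ) z * E
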